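/- Suppose X ∈ ℝ^p is a mean-zero random vector with positive definite covariance Σ_X and finite fourth moments satisfying Condition 1, and Y follows model (2) with ε mean-zero and independent of X. Then for every pair i ≤ j, the (i,j) entry ψ_{ij} of the principal Hessian matrix Ψ = Σ_X⁻¹ Σ_{YXX} Σ_X⁻¹ satisfies: ψ_{ij} = ψ_{ji}, and ψ_{ij} ≠ 0 if and only if β_{ij} ≠ 0. (Proposition 2) -/

import Mathlib

open MeasureTheory ProbabilityTheory Matrix

/-- **Proposition 2.** Suppose `X` is a mean-zero random vector with positive definite
covariance `Σ_X` and finite fourth moments satisfying Condition 1 (C1: all third moments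
`E[X_iX_jX_k]` vanish; C2: with `Z = Σ_X⁻¹X`, `Cov(X_kX_ℓ, Z_iZ_j) ≠ 0` iff
`(k = i ∧ ℓ = j) ∨ (k = j ∧ ℓ = i)`), and `Y` follows model (2) with `ε` mean-zero and
independent of `X`. Then for every `i ≤ j`, the entries of
`Ψ = Σ_X⁻¹ Σ_{YXX} Σ_X⁻¹` satisfy `ψ_{ij} = ψ_{ji}` and `ψ_{ij} ≠ 0 ↔ β_{ij} ≠ 0`. -/
theorem proposition2 {Ω : Type*} [MeasurableSpace Ω] (μ : Measure Ω)
    [IsProbabilityMeasure μ] {p : ℕ}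
    (X : Ω → Fin p → ℝ) (hXm : Measurable X)
    (Sig : Matrix (Fin p) (Fin p) ℝ) (hSig : Sig.PosDef)
    -- mean zero, covariance `Sig`, finite fourth moments
    (hmean : ∀ i, ∫ ω, X ω i ∂μ = 0)
    (hcov : ∀ i j, ∫ ω, X ω i * X ω j ∂μ = Sig i j)
    (hmom4 : ∀ i j k l : Fin p, Integrable (fun ω => X ω i * X ω j * X ω k * X ω l) μ)
    (hmom2 : ∀ i j : Fin p, Integrable (fun ω => X ω i * X ω j) μ)
    (hXint : ∀ i, Integrable (fun ω => X ω i) μ)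
    -- Condition 1 (C1): third moments vanish
    (hC1 : ∀ i j k : Fin p, ∫ ω, X ω i * X ω j * X ω k ∂μ = 0)
    (hmom3 : ∀ i j k : Fin p, Integrable (fun ω => X ω i * X ω j * X ω k) μ)
    -- Condition 1 (C2), with `Z = Σ_X⁻¹ X`
    (Z : Ω → Fin p → ℝ) (hZ : ∀ ω, Z ω = Sig⁻¹.mulVec (X ω))
    (hC2 : ∀ k l i j : Fin p,
      ((∫ ω, (X ω k * X ω l) * (Z ω i * Z ω j) ∂μ)
          - (∫ ω, X ω k * X ω l ∂μ) * (∫ ω, Z ω i * Z ω j ∂μ) ≠ 0) ↔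
        (k = i ∧ l = j) ∨ (k = j ∧ l = i))
    -- model (2)
    (θ : Fin p → ℝ) (β : Fin p → Fin p → ℝ)
    (ε : Ω → ℝ) (hεm : Measurable ε) (hindep : IndepFun ε X μ)
    (hεint : Integrable ε μ) (hεmean : ∫ ω, ε ω ∂μ = 0)
    (Y : Ω → ℝ)
    (hY : ∀ ω, Y ω = ∑ i, θ i * X ω i
        + ∑ i, ∑ j ∈ Finset.Ici i, β i j * X ω i * X ω j + ε ω)
    (hYint : Integrable Y μ)
    (hYXX : ∀ k l : Fin p, Integrable (fun ω => Y ω * X ω k * X ω l) μ)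
    (Syxx Ψ : Matrix (Fin p) (Fin p) ℝ)
    (hSyxx : ∀ k l, Syxx k l = ∫ ω, (Y ω - ∫ ω', Y ω' ∂μ) * (X ω k * X ω l) ∂μ)
    (hΨ : Ψ = Sig⁻¹ * Syxx * Sig⁻¹) :
    ∀ i j : Fin p, i ≤ j → Ψ i j = Ψ j i ∧ (Ψ i j ≠ 0 ↔ β i j ≠ 0) := by
  classical
  have hXk : ∀ k, Measurable fun ω => X ω k := fun k => (measurable_pi_apply k).comp hXm
  have hAsymm : ∀ a b : Fin p, Sig⁻¹ a b = Sig⁻¹ b a := fun a b => by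
    simpa using (hSig.isHermitian.inv.apply a b).symm
  have hZsum : ∀ (ω : Ω) (a : Fin p), Z ω a = ∑ k, Sig⁻¹ a k * X ω k := by
    intro ω a
    rw [hZ]
    simp [Matrix.mulVec, dotProduct]
  have hZZ : ∀ (ω : Ω) (a b : Fin p),
      Z ω a * Z ω b = ∑ k, ∑ l, (Sig⁻¹ a k * Sig⁻¹ b l) * (X ω k * X ω l) := by
    intro ω a b
    rw [hZsum ω a, hZsum ω b, Finset.sum_mul_sum]
    exact Finset.sum_congr rfl fun k _ => Finset.sum_congr rfl fun l _ => by ring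
  -- integrability of products with Z_a Z_b
  have hWint : ∀ a b : Fin p, Integrable (fun ω => Z ω a * Z ω b) μ := by
    intro a b
    have h : Integrable (fun ω => ∑ k, ∑ l, (Sig⁻¹ a k * Sig⁻¹ b l) * (X ω k * X ω l)) μ :=
      integrable_finset_sum _ fun k _ => integrable_finset_sum _ fun l _ =>
        (hmom2 k l).const_mul _
    exact h.congr (ae_of_all _ fun ω => (hZZ ω a b).symm)
  have hXWpt : ∀ (ω : Ω) (m a b : Fin p),
      X ω m * (Z ω a * Z ω b) = ∑ k, ∑ l, (Sig⁻¹ a k * Sig⁻¹ b l) * (X ω m * X ω k * X ω l) := by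
    intro ω m a b
    rw [hZZ ω a b, Finset.mul_sum]
    refine Finset.sum_congr rfl fun k _ => ?_
    rw [Finset.mul_sum]
    exact Finset.sum_congr rfl fun l _ => by ring
  have hXWint : ∀ m a b : Fin p, Integrable (fun ω => X ω m * (Z ω a * Z ω b)) μ := by
    intro m a b
    have h : Integrable (fun ω => ∑ k, ∑ l, (Sig⁻¹ a k * Sig⁻¹ b l) * (X ω m * X ω k * X ω l)) μ :=
      integrable_finset_sum _ fun k _ => integrable_finset_sum _ fun l _ =>
        (hmom3 m k l).const_mul _
    exact h.congr (ae_of_all _ fun ω => (hXWpt ω m a b).symm)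
  have hXXWint : ∀ m n a b : Fin p,
      Integrable (fun ω => X ω m * X ω n * (Z ω a * Z ω b)) μ := by
    intro m n a b
    have hpt : ∀ ω : Ω, X ω m * X ω n * (Z ω a * Z ω b)
        = ∑ k, ∑ l, (Sig⁻¹ a k * Sig⁻¹ b l) * (X ω m * X ω n * X ω k * X ω l) := by
      intro ω
      rw [hZZ ω a b, Finset.mul_sum]
      refine Finset.sum_congr rfl fun k _ => ?_
      rw [Finset.mul_sum]
      exact Finset.sum_congr rfl fun l _ => by ring
    have h : Integrable (fun ω => ∑ k, ∑ l,
        (Sig⁻¹ a k * Sig⁻¹ b l) * (X ω m * X ω n * X ω k * X ω l)) μ :=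
      integrable_finset_sum _ fun k _ => integrable_finset_sum _ fun l _ =>
        (hmom4 m n k l).const_mul _
    exact h.congr (ae_of_all _ fun ω => (hpt ω).symm)
  have hXW0 : ∀ m a b : Fin p, ∫ ω, X ω m * (Z ω a * Z ω b) ∂μ = 0 := by
    intro m a b
    rw [integral_congr_ae (ae_of_all _ fun ω => hXWpt ω m a b)]
    rw [integral_finset_sum _ fun k _ => integrable_finset_sum _ fun l _ =>
      (hmom3 m k l).const_mul _]
    refine Finset.sum_eq_zero fun k _ => ?_
    rw [integral_finset_sum _ fun l _ => (hmom3 m k l).const_mul _]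
    refine Finset.sum_eq_zero fun l _ => ?_
    rw [integral_const_mul, hC1 m k l, mul_zero]
  -- independence of ε and Z_a Z_b
  have hWmeas : ∀ a b : Fin p, IndepFun ε (fun ω => Z ω a * Z ω b) μ := by
    intro a b
    have hφ : Measurable fun v : Fin p → ℝ => Sig⁻¹.mulVec v a * Sig⁻¹.mulVec v b := by
      have h1 : ∀ c : Fin p, Measurable fun v : Fin p → ℝ => Sig⁻¹.mulVec v c := by
        intro c
        simp only [Matrix.mulVec, dotProduct]
        exact Finset.measurable_sum _ fun k _ => (measurable_pi_apply k).const_mul _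
      exact (h1 a).mul (h1 b)
    have := hindep.comp measurable_id hφ
    have heq : (fun v : Fin p → ℝ => Sig⁻¹.mulVec v a * Sig⁻¹.mulVec v b) ∘ X
        = fun ω => Z ω a * Z ω b := by
      funext ω
      simp [Function.comp, hZ]
    rwa [heq] at this
  have hεW0 : ∀ a b : Fin p, ∫ ω, ε ω * (Z ω a * Z ω b) ∂μ = 0 := by
    intro a b
    have h : ∫ ω, ε ω * (Z ω a * Z ω b) ∂μ
        = (∫ ω, ε ω ∂μ) * ∫ ω, Z ω a * Z ω b ∂μ :=
      (hWmeas a b).integral_mul_eq_mul_integral hεint.aestronglyMeasurable (hWint a b).aestronglyMeasurable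
    rw [h, hεmean, zero_mul]
  have hεWint : ∀ a b : Fin p, Integrable (fun ω => ε ω * (Z ω a * Z ω b)) μ :=
    fun a b => (hWmeas a b).integrable_mul hεint (hWint a b)
  -- normalized model
  have hYeq : ∀ ω, Y ω = (∑ m, θ m * X ω m)
      + (∑ m, ∑ n ∈ Finset.Ici m, β m n * (X ω m * X ω n)) + ε ω := by
    intro ω
    rw [hY ω]
    congr 1
    congr 1
    exact Finset.sum_congr rfl fun m _ => Finset.sum_congr rfl fun n _ => mul_assoc _ _ _
  have hS1int : Integrable (fun ω => ∑ m, θ m * X ω m) μ :=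
    integrable_finset_sum _ fun m _ => (hXint m).const_mul _
  have hS2int : Integrable (fun ω => ∑ m, ∑ n ∈ Finset.Ici m, β m n * (X ω m * X ω n)) μ :=
    integrable_finset_sum _ fun m _ => integrable_finset_sum _ fun n _ =>
      (hmom2 m n).const_mul _
  have hS12int : Integrable (fun ω => (∑ m, θ m * X ω m)
      + ∑ m, ∑ n ∈ Finset.Ici m, β m n * (X ω m * X ω n)) μ := hS1int.add hS2int
  have hEYv : (∫ ω, Y ω ∂μ) = ∑ m, ∑ n ∈ Finset.Ici m, β m n * ∫ ω, X ω m * X ω n ∂μ := by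
    rw [integral_congr_ae (ae_of_all _ hYeq), integral_add hS12int hεint,
      integral_add hS1int hS2int, hεmean, add_zero,
      integral_finset_sum _ (fun m _ => (hXint m).const_mul _),
      integral_finset_sum _ (fun m _ => integrable_finset_sum _ fun n _ =>
        (hmom2 m n).const_mul _)]
    have h1 : (∑ m, ∫ ω, θ m * X ω m ∂μ) = 0 :=
      Finset.sum_eq_zero fun m _ => by rw [integral_const_mul, hmean, mul_zero]
    rw [h1, zero_add]
    exact Finset.sum_congr rfl fun m _ =>
      (integral_finset_sum _ fun n _ => (hmom2 m n).const_mul _).trans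
        (Finset.sum_congr rfl fun n _ => integral_const_mul _ _)
  set EY : ℝ := ∫ ω, Y ω ∂μ with hEYdef
  -- Step A : Ψ a b = ∫ (Y - EY) * Z_a Z_b
  have hYWint : ∀ k l : Fin p, Integrable (fun ω => (Y ω - EY) * (X ω k * X ω l)) μ := by
    intro k l
    exact ((hYXX k l).sub ((hmom2 k l).const_mul EY)).congr
      (ae_of_all _ fun ω => by simp only [Pi.sub_apply]; ring)
  have hΨint : ∀ a b : Fin p, Ψ a b = ∫ ω, (Y ω - EY) * (Z ω a * Z ω b) ∂μ := by
    intro a b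
    have step1 : Ψ a b = ∑ l, ∑ k, Sig⁻¹ a k * Syxx k l * Sig⁻¹ l b := by
      rw [hΨ, Matrix.mul_apply]
      exact Finset.sum_congr rfl fun l _ => by rw [Matrix.mul_apply, Finset.sum_mul]
    have step2 : ∀ k l : Fin p, Sig⁻¹ a k * Syxx k l * Sig⁻¹ l b
        = ∫ ω, (Sig⁻¹ a k * Sig⁻¹ b l) * ((Y ω - EY) * (X ω k * X ω l)) ∂μ := by
      intro k l
      rw [integral_const_mul, hSyxx k l, hAsymm l b]
      ring
    have hpt : ∀ ω : Ω, (Y ω - EY) * (Z ω a * Z ω b)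
        = ∑ k, ∑ l, (Sig⁻¹ a k * Sig⁻¹ b l) * ((Y ω - EY) * (X ω k * X ω l)) := by
      intro ω
      rw [hZZ ω a b, Finset.mul_sum]
      refine Finset.sum_congr rfl fun k _ => ?_
      rw [Finset.mul_sum]
      exact Finset.sum_congr rfl fun l _ => by ring
    rw [step1, Finset.sum_comm, integral_congr_ae (ae_of_all _ hpt),
      integral_finset_sum _ fun k _ => integrable_finset_sum _ fun l _ =>
        (hYWint k l).const_mul _]
    refine Finset.sum_congr rfl fun k _ => ?_
    rw [integral_finset_sum _ fun l _ => (hYWint k l).const_mul _]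
    exact Finset.sum_congr rfl fun l _ => step2 k l
  -- Step B : value of the integral
  have hval : ∀ a b : Fin p, (∫ ω, (Y ω - EY) * (Z ω a * Z ω b) ∂μ)
      = ∑ m, ∑ n ∈ Finset.Ici m, β m n *
          ((∫ ω, (X ω m * X ω n) * (Z ω a * Z ω b) ∂μ)
            - (∫ ω, X ω m * X ω n ∂μ) * (∫ ω, Z ω a * Z ω b ∂μ)) := by
    intro a b
    have hpt : ∀ ω : Ω, (Y ω - EY) * (Z ω a * Z ω b)
        = ((∑ m, θ m * (X ω m * (Z ω a * Z ω b)))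
            + (∑ m, ∑ n ∈ Finset.Ici m, β m n * (X ω m * X ω n * (Z ω a * Z ω b)))
            + ε ω * (Z ω a * Z ω b))
          - EY * (Z ω a * Z ω b) := by
      intro ω
      rw [hYeq ω]
      rw [sub_mul, add_mul, add_mul, Finset.sum_mul, Finset.sum_mul]
      congr 2
      · congr 1
        · exact Finset.sum_congr rfl fun m _ => by ring
        · refine Finset.sum_congr rfl fun m _ => ?_
          rw [Finset.sum_mul]
          exact Finset.sum_congr rfl fun n _ => by ring
    have i1 : Integrable (fun ω => ∑ m, θ m * (X ω m * (Z ω a * Z ω b))) μ :=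
      integrable_finset_sum _ fun m _ => (hXWint m a b).const_mul _
    have i2 : Integrable
        (fun ω => ∑ m, ∑ n ∈ Finset.Ici m, β m n * (X ω m * X ω n * (Z ω a * Z ω b))) μ :=
      integrable_finset_sum _ fun m _ => integrable_finset_sum _ fun n _ =>
        (hXXWint m n a b).const_mul _
    have i12 : Integrable (fun ω => (∑ m, θ m * (X ω m * (Z ω a * Z ω b)))
        + ∑ m, ∑ n ∈ Finset.Ici m, β m n * (X ω m * X ω n * (Z ω a * Z ω b))) μ := i1.add i2
    have i12e : Integrable (fun ω => ((∑ m, θ m * (X ω m * (Z ω a * Z ω b)))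
        + ∑ m, ∑ n ∈ Finset.Ici m, β m n * (X ω m * X ω n * (Z ω a * Z ω b)))
        + ε ω * (Z ω a * Z ω b)) μ := i12.add (hεWint a b)
    rw [integral_congr_ae (ae_of_all _ hpt),
      integral_sub i12e ((hWint a b).const_mul EY),
      integral_add i12 (hεWint a b), integral_add i1 i2,
      hεW0 a b, add_zero, integral_const_mul,
      integral_finset_sum _ (fun m _ => (hXWint m a b).const_mul _)]
    have h1 : (∑ m, ∫ ω, θ m * (X ω m * (Z ω a * Z ω b)) ∂μ) = 0 :=
      Finset.sum_eq_zero fun m _ => by rw [integral_const_mul, hXW0, mul_zero]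
    rw [h1, zero_add,
      integral_finset_sum _ (fun m _ => integrable_finset_sum _ fun n _ =>
        (hXXWint m n a b).const_mul _),
      hEYv, Finset.sum_mul, ← Finset.sum_sub_distrib]
    refine Finset.sum_congr rfl fun m _ => ?_
    rw [integral_finset_sum _ (fun n _ => (hXXWint m n a b).const_mul _),
      Finset.sum_mul, ← Finset.sum_sub_distrib]
    refine Finset.sum_congr rfl fun n _ => ?_
    rw [integral_const_mul]
    ring
  -- conclusion
  intro i j hij
  have hsymm : Ψ i j = Ψ j i := by
    rw [hΨint i j, hΨint j i]
    exact integral_congr_ae (ae_of_all _ fun ω => by ring)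
  refine ⟨hsymm, ?_⟩
  have hcov : ∀ m n : Fin p, ¬((m = i ∧ n = j) ∨ (m = j ∧ n = i)) →
      (∫ ω, (X ω m * X ω n) * (Z ω i * Z ω j) ∂μ)
        - (∫ ω, X ω m * X ω n ∂μ) * (∫ ω, Z ω i * Z ω j ∂μ) = 0 := by
    intro m n h
    by_contra hne
    exact h ((hC2 m n i j).mp hne)
  have hcollapse : Ψ i j = β i j *
      ((∫ ω, (X ω i * X ω j) * (Z ω i * Z ω j) ∂μ)
        - (∫ ω, X ω i * X ω j ∂μ) * (∫ ω, Z ω i * Z ω j ∂μ)) := by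
    rw [hΨint i j, hval i j]
    rw [Finset.sum_eq_single i]
    · exact Finset.sum_eq_single_of_mem j (Finset.mem_Ici.mpr hij) fun n hn hnj => by
        rw [hcov i n (by
          rintro (⟨-, h2⟩ | ⟨h1, h2⟩)
          · exact hnj h2
          · exact hnj (h2.trans h1)), mul_zero]
    · intro m _ hmi
      refine Finset.sum_eq_zero fun n hn => ?_
      rw [hcov m n ?_, mul_zero]
      rintro (⟨h1, -⟩ | ⟨h1, h2⟩)
      · exact hmi h1
      · refine hmi ?_
        have hnm : m ≤ n := Finset.mem_Ici.mp hn
        rw [h1, h2] at hnm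
        exact h1.trans (le_antisymm hnm hij)
    · intro h
      exact absurd (Finset.mem_univ i) h
  have hCne : (∫ ω, (X ω i * X ω j) * (Z ω i * Z ω j) ∂μ)
      - (∫ ω, X ω i * X ω j ∂μ) * (∫ ω, Z ω i * Z ω j ∂μ) ≠ 0 :=
    (hC2 i j i j).mpr (Or.inl ⟨rfl, rfl⟩)
  rw [hcollapse]
  constructor
  · intro h hb
    exact h (by rw [hb, zero_mul])
  · intro hb
    exact mul_ne_zero hb hCne
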